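/- For every positive integer k, the thickened 4k-path has edge-crossing width at least k. -/

import Mathlib

open SimpleGraph

universe u

/-- A tree-cut decomposition of a graph `G`: a finite tree `T` together with
pairwise disjoint (possibly empty) bags covering the vertex set of `G`. -/
structure TreeCutDecomp {V : Type u} (G : SimpleGraph V) where
  β : Type
  fintypeβ : Fintype β
  T : SimpleGraph β
  isTree : T.IsTree
  bag : β → Set V
  disj : Pairwise fun s t => Disjoint (bag s) (bag t)
  covers : ∀ v : V, ∃ t, v ∈ bag t

namespace TreeCutDecomp

variable {V : Type u} {G : SimpleGraph V}

/-- The edge `e` of `G` crosses the bag at node `t`: its endpoints lie in bag-unions of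
two distinct components of `T - t`. -/
def Crosses (D : TreeCutDecomp G) (t : D.β) (e : Sym2 V) : Prop :=
  e ∈ G.edgeSet ∧ ∃ (u v : V) (s₁ s₂ : D.β) (h₁ : s₁ ≠ t) (h₂ : s₂ ≠ t),
    e = s(u, v) ∧ u ∈ D.bag s₁ ∧ v ∈ D.bag s₂ ∧
    ¬ (D.T.induce {x | x ≠ t}).Reachable ⟨s₁, h₁⟩ ⟨s₂, h₂⟩

/-- The number of edges crossing the bag at node `t`. -/
noncomputable def crossNum (D : TreeCutDecomp G) (t : D.β) : ℕ :=
  {e : Sym2 V | D.Crosses t e}.ncard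

/-- The crossing number of the decomposition is at most `k`. -/
def CrossLE (D : TreeCutDecomp G) (k : ℕ) : Prop := ∀ t, D.crossNum t ≤ k

/-- The thickness (maximum bag size) of the decomposition is at most `a`. -/
def ThickLE (D : TreeCutDecomp G) (a : ℕ) : Prop := ∀ t, (D.bag t).ncard ≤ a

end TreeCutDecomp

/-- The `α`-edge-crossing width: minimum crossing number over tree-cut decompositions
of thickness at most `α`. -/
noncomputable def ecrwA {V : Type u} (G : SimpleGraph V) (a : ℕ) : ℕ :=
  sInf {k | ∃ D : TreeCutDecomp G, D.ThickLE a ∧ D.CrossLE k}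

/-- The edge-crossing width: minimum over tree-cut decompositions of the maximum of the
thickness and the crossing number. -/
noncomputable def ecrw {V : Type u} (G : SimpleGraph V) : ℕ :=
  sInf {k | ∃ D : TreeCutDecomp G, D.ThickLE k ∧ D.CrossLE k}

/-- The thickened `n`-path: a path `u_0, …, u_{n-1}` with each edge replaced by `n`
internally vertex-disjoint paths of length two. `Sum.inl i` is `u_i`; `Sum.inr (a, j)`
is the `j`-th middle vertex between `u_a` and `u_{a+1}`. -/
def thickenedPath (n : ℕ) : SimpleGraph (Fin n ⊕ (Fin (n - 1) × Fin n)) :=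
  SimpleGraph.fromRel fun x y =>
    match x, y with
    | Sum.inl i, Sum.inr (a, _) => (i : ℕ) = (a : ℕ) ∨ (i : ℕ) = (a : ℕ) + 1
    | _, _ => False

/-! ### Auxiliary lemmas -/

lemma walk_to_induce_reach {β : Type} {T : SimpleGraph β} {t : β} :
    ∀ {a b : β} (w : T.Walk a b), t ∉ w.support →
    ∀ (ha : a ≠ t) (hb : b ≠ t),
      (T.induce {x | x ≠ t}).Reachable ⟨a, ha⟩ ⟨b, hb⟩ := by
  intro a b w
  induction w with
  | nil => intro _ ha hb; exact Reachable.refl _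
  | @cons a c b h w ih =>
    intro hsup ha hb
    rw [SimpleGraph.Walk.support_cons, List.mem_cons] at hsup
    push_neg at hsup
    have hc : c ≠ t := fun hct => hsup.2 (hct ▸ w.start_mem_support)
    have hadj : (T.induce {x | x ≠ t}).Adj ⟨a, ha⟩ ⟨c, hc⟩ := by
      simpa using h
    exact hadj.reachable.trans (ih hsup.2 hc hb)

lemma induce_reach_to_walk {β : Type} {T : SimpleGraph β} {t a b : β} (ha : a ≠ t) (hb : b ≠ t)
    (h : (T.induce {x | x ≠ t}).Reachable ⟨a, ha⟩ ⟨b, hb⟩) :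
    ∃ w : T.Walk a b, t ∉ w.support := by
  obtain ⟨w⟩ := h
  refine ⟨w.map (SimpleGraph.Embedding.induce {x | x ≠ t}).toHom, ?_⟩
  intro ht
  have ht2 : t ∈ w.support.map (SimpleGraph.Embedding.induce (G := T) {x | x ≠ t}).toHom := by
    rw [← SimpleGraph.Walk.support_map]; exact ht
  obtain ⟨x, hx, hxt⟩ := List.mem_map.mp ht2
  exact x.2 hxt

lemma tree_sep {β : Type} [DecidableEq β] {T : SimpleGraph β} (hT : T.IsAcyclic) {a b t : β}
    (p : T.Walk a b) (hp : p.IsPath) (htp : t ∈ p.support)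
    (ha : a ≠ t) (hb : b ≠ t) :
    ¬ (T.induce {x | x ≠ t}).Reachable ⟨a, ha⟩ ⟨b, hb⟩ := by
  intro h
  obtain ⟨w, hw⟩ := induce_reach_to_walk ha hb h
  have huniq := hT.path_unique ⟨p, hp⟩ w.toPath
  have htw : t ∈ (w.toPath : T.Walk a b).support := by
    rw [← huniq]; exact htp
  exact hw (SimpleGraph.Walk.support_toPath_subset w htw)

/-- The trivial one-node tree-cut decomposition. -/
noncomputable def trivialDecomp {V : Type u} (G : SimpleGraph V) : TreeCutDecomp G where
  β := Unit
  fintypeβ := inferInstance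
  T := ⊥
  isTree := ⟨⟨fun a b => by cases a; cases b; exact Reachable.refl _⟩, isAcyclic_bot⟩
  bag _ := Set.univ
  disj := by intro s t hst; exact absurd (Subsingleton.elim s t) hst
  covers v := ⟨(), trivial⟩

lemma thick_adj_left {n : ℕ} (i : Fin n) (a : Fin (n - 1)) (j : Fin n)
    (h : (i : ℕ) = (a : ℕ)) :
    (thickenedPath n).Adj (Sum.inl i) (Sum.inr (a, j)) := by
  exact ⟨Sum.inl_ne_inr, Or.inl (Or.inl h)⟩

lemma thick_adj_right {n : ℕ} (i : Fin n) (a : Fin (n - 1)) (j : Fin n)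
    (h : (i : ℕ) = (a : ℕ) + 1) :
    (thickenedPath n).Adj (Sum.inl i) (Sum.inr (a, j)) := by
  exact ⟨Sum.inl_ne_inr, Or.inl (Or.inr h)⟩

lemma sym2_mid_inj {n : ℕ} {x y : Fin n} {p q : Fin (n - 1) × Fin n}
    (h : s(Sum.inl x, (Sum.inr p : Fin n ⊕ (Fin (n - 1) × Fin n)))
       = s(Sum.inl y, Sum.inr q)) : p = q := by
  rw [Sym2.eq_iff] at h
  rcases h with ⟨h1, h2⟩ | ⟨h1, h2⟩
  · exact Sum.inr.inj h2
  · exact absurd h1 Sum.inl_ne_inr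

/-- For every positive integer `k`, the thickened `4k`-path has edge-crossing width
at least `k`. -/
theorem stmt_6 (k : ℕ) (hk : 0 < k) : k ≤ ecrw (thickenedPath (4 * k)) := by
  classical
  set V' := (Fin (4 * k) ⊕ (Fin (4 * k - 1) × Fin (4 * k))) with hV'
  apply le_csInf
  · refine ⟨Fintype.card V', trivialDecomp _, fun t => ?_, fun t => ?_⟩
    · simp [trivialDecomp, Set.ncard_univ, Nat.card_eq_fintype_card, hV',
        Fintype.card_sum, Fintype.card_prod, Fintype.card_fin]
    · have hempty : {e : Sym2 V' | (trivialDecomp (thickenedPath (4 * k))).Crosses t e} = ∅ := by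
        ext e
        simp only [Set.mem_setOf_eq, Set.mem_empty_iff_false, iff_false]
        rintro ⟨-, u, v, s₁, s₂, h₁, -⟩
        exact h₁ (Subsingleton.elim (α := Unit) s₁ t)
      have h0 : {e : Sym2 V' | (trivialDecomp (thickenedPath (4 * k))).Crosses t e}.ncard = 0 := by
        rw [hempty, Set.ncard_empty]
      exact h0.le.trans (Nat.zero_le _)
  rintro m ⟨D, hthick, hcross⟩
  by_contra hlt
  push_neg at hlt
  haveI : DecidableEq D.β := Classical.decEq _
  -- `hlt : m < k`
  have hFex : ∀ v : V', ∃ t, v ∈ D.bag t := D.covers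
  set F : V' → D.β := fun v => (hFex v).choose with hFdef
  have hF : ∀ v : V', v ∈ D.bag (F v) := fun v => (hFex v).choose_spec
  -- counting lemma: at most `m` vertices from an injective family live in one bag
  have C1 : ∀ (g : Fin (4 * k) → V'), Function.Injective g → ∀ t : D.β,
      (Finset.univ.filter fun j => F (g j) = t).card ≤ m := by
    intro g hg t
    refine le_trans ?_ (hthick t)
    rw [Set.ncard_eq_toFinset_card _ (Set.toFinite _)]
    apply Finset.card_le_card_of_injOn g
    · intro j hj
      rw [Finset.mem_coe, Set.Finite.mem_toFinset]
      have := (Finset.mem_filter.mp hj).2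
      exact this ▸ hF (g j)
    · exact hg.injOn
  -- counting lemma: crossing edges at `t` are at most `m`
  have C2 : ∀ (t : D.β) (A : Finset (Fin (4 * k))) (e : Fin (4 * k) → Sym2 V'),
      (∀ j ∈ A, D.Crosses t (e j)) → Set.InjOn e A → A.card ≤ m := by
    intro t A e hce hinj
    refine le_trans ?_ (hcross t)
    rw [TreeCutDecomp.crossNum, Set.ncard_eq_toFinset_card _ (Set.toFinite _)]
    apply Finset.card_le_card_of_injOn e
    · intro j hj
      rw [Finset.mem_coe, Set.Finite.mem_toFinset]
      exact hce j hj
    · exact hinj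
  -- Step 1: two consecutive hubs in distinct bags
  have step1 : ∃ i : ℕ, ∃ hi : i + 1 < 4 * k,
      F (Sum.inl ⟨i, by omega⟩) ≠ F (Sum.inl ⟨i + 1, hi⟩) := by
    by_contra hall
    push_neg at hall
    have hchain : ∀ i (h : i < 4 * k),
        F (Sum.inl ⟨i, h⟩) = F (Sum.inl ⟨0, by omega⟩) := by
      intro i
      induction i with
      | zero => intro h; rfl
      | succ p ih =>
        intro h
        have hp : p + 1 < 4 * k := h
        have := hall p hp
        rw [← this]
        exact ih (by omega)
    have hone : (Finset.univ.filter fun i : Fin (4 * k) =>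
        F (Sum.inl i) = F (Sum.inl ⟨0, by omega⟩)) = Finset.univ := by
      ext i
      simp only [Finset.mem_filter, Finset.mem_univ, true_and, iff_true]
      have := hchain i.1 i.2
      simpa using this
    have hcard := C1 (fun i => Sum.inl i) (fun a b h => Sum.inl.inj h) (F (Sum.inl ⟨0, by omega⟩))
    rw [hone, Finset.card_univ] at hcard
    simp only [Fintype.card_fin] at hcard
    omega
  obtain ⟨i, hi, hss0⟩ := step1
  set a : Fin (4 * k - 1) := ⟨i, by omega⟩ with ha
  set hubL : V' := Sum.inl ⟨i, by omega⟩ with hhubL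
  set hubR : V' := Sum.inl ⟨i + 1, hi⟩ with hhubR
  set mid : Fin (4 * k) → V' := fun j => Sum.inr (a, j) with hmid
  have hmidinj : Function.Injective mid := by
    intro x y h
    simp only [hmid] at h
    exact congrArg Prod.snd (Sum.inr.inj h)
  have hadjL : ∀ j, (thickenedPath (4 * k)).Adj hubL (mid j) := fun j =>
    thick_adj_left _ _ _ (by simp [ha])
  have hadjR : ∀ j, (thickenedPath (4 * k)).Adj hubR (mid j) := fun j =>
    thick_adj_right _ _ _ (by simp [ha])
  set s : D.β := F hubL with hs
  set s' : D.β := F hubR with hs'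
  have hbagL : hubL ∈ D.bag s := hF hubL
  have hbagR : hubR ∈ D.bag s' := hF hubR
  have hss : s ≠ s' := hss0
  clear_value s s'
  -- case split on existence of a separating node
  by_cases hAB : ∃ (t : D.β) (h1 : s ≠ t) (h2 : s' ≠ t),
      ¬ (D.T.induce {x | x ≠ t}).Reachable ⟨s, h1⟩ ⟨s', h2⟩
  · -- Case A: a node `t` separates `s` and `s'`
    obtain ⟨t, h1, h2, hsep⟩ := hAB
    set A : Finset (Fin (4 * k)) := Finset.univ.filter (fun j => ¬ F (mid j) = t) with hA
    set B : Finset (Fin (4 * k)) := Finset.univ.filter (fun j => F (mid j) = t) with hB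
    have hsub : (Finset.univ : Finset (Fin (4 * k))) ⊆ A ∪ B := by
      intro j _
      by_cases h : F (mid j) = t
      · exact Finset.mem_union_right _ (Finset.mem_filter.mpr ⟨Finset.mem_univ _, h⟩)
      · exact Finset.mem_union_left _ (Finset.mem_filter.mpr ⟨Finset.mem_univ _, h⟩)
    have hcardA : 4 * k ≤ A.card + m := by
      have h1' := C1 mid hmidinj t
      have h2' : (Finset.univ : Finset (Fin (4 * k))).card ≤ A.card + B.card :=
        le_trans (Finset.card_le_card hsub) (Finset.card_union_le _ _)
      rw [Finset.card_univ, Fintype.card_fin] at h2'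
      rw [← hB] at h1'
      omega
    set e : Fin (4 * k) → Sym2 V' := fun j =>
      if h : ∃ (hr : F (mid j) ≠ t),
          ¬ (D.T.induce {x | x ≠ t}).Reachable ⟨F (mid j), hr⟩ ⟨s, h1⟩
      then s(hubL, mid j) else s(hubR, mid j) with he
    have hce : ∀ j ∈ A, D.Crosses t (e j) := by
      intro j hj
      have hr : F (mid j) ≠ t := (Finset.mem_filter.mp hj).2
      by_cases hcond : ∃ (hr : F (mid j) ≠ t),
          ¬ (D.T.induce {x | x ≠ t}).Reachable ⟨F (mid j), hr⟩ ⟨s, h1⟩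
      · obtain ⟨hr', hnr⟩ := hcond
        rw [show e j = s(hubL, mid j) from by rw [he]; exact dif_pos ⟨hr', hnr⟩]
        refine ⟨((thickenedPath (4 * k)).mem_edgeSet).mpr (hadjL j), hubL, mid j, s, F (mid j),
          h1, hr', rfl, hbagL, hF (mid j), ?_⟩
        intro hre
        exact hnr hre.symm
      · rw [show e j = s(hubR, mid j) from by rw [he]; exact dif_neg hcond]
        push_neg at hcond
        have hre : (D.T.induce {x | x ≠ t}).Reachable ⟨F (mid j), hr⟩ ⟨s, h1⟩ :=
          hcond hr
        refine ⟨((thickenedPath (4 * k)).mem_edgeSet).mpr (hadjR j), hubR, mid j, s', F (mid j),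
          h2, hr, rfl, hbagR, hF (mid j), ?_⟩
        intro hre'
        exact hsep (hre.symm.trans hre'.symm).symm.symm
    have hinj : Set.InjOn e A := by
      intro x hx y hy hxy
      have hpq : (a, x) = (a, y) := by
        rw [he] at hxy
        simp only at hxy
        split_ifs at hxy <;> exact sym2_mid_inj hxy
      exact (Prod.ext_iff.mp hpq).2
    have := C2 t A e hce hinj
    omega
  · -- Case B: no node separates `s` and `s'`
    push_neg at hAB
    have hs's : s' ≠ s := fun h => hss h.symm
    have hT := D.isTree.2
    -- claim: every other bag is separated from s' by s, or from s by s'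
    have claim : ∀ (r : D.β) (hrs : r ≠ s) (hrs' : r ≠ s'),
        ¬ (D.T.induce {x | x ≠ s}).Reachable ⟨r, hrs⟩ ⟨s', hs's⟩ ∨
        ¬ (D.T.induce {x | x ≠ s'}).Reachable ⟨r, hrs'⟩ ⟨s, hss⟩ := by
      intro r hrs hrs'
      by_contra hboth
      push_neg at hboth
      obtain ⟨hre1, hre2⟩ := hboth
      obtain ⟨W1, hW1⟩ := induce_reach_to_walk hrs hs's hre1
      obtain ⟨W2, hW2⟩ := induce_reach_to_walk hrs' hss hre2
      obtain ⟨Rw, hRp⟩ := (W1.reverse.append W2).toPath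
      cases Rw with
      | nil => exact hss rfl
      | @cons _ c _ hadj w' =>
        cases w' with
        | nil =>
          -- `hadj : D.T.Adj s' s`: the two bags are adjacent in the tree
          have hP1s : s ∉ (W1.toPath : D.T.Walk r s').support :=
            fun h => hW1 (SimpleGraph.Walk.support_toPath_subset W1 h)
          have hP2s' : s' ∉ (W2.toPath : D.T.Walk r s).support :=
            fun h => hW2 (SimpleGraph.Walk.support_toPath_subset W2 h)
          have hP1rev : ((W1.toPath : D.T.Walk r s').reverse).IsPath :=
            W1.toPath.2.reverse
          have hsnot : s ∉ ((W1.toPath : D.T.Walk r s').reverse).support := by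
            rw [SimpleGraph.Walk.support_reverse, List.mem_reverse]
            exact hP1s
          have hQp : (SimpleGraph.Walk.cons hadj.symm
              (W1.toPath : D.T.Walk r s').reverse).IsPath := hP1rev.cons hsnot
          have huniq := hT.path_unique
            ⟨SimpleGraph.Walk.cons hadj.symm (W1.toPath : D.T.Walk r s').reverse, hQp⟩
            (W2.toPath.reverse)
          have hval := congrArg Subtype.val huniq
          simp only at hval
          have hmem : s' ∈ (SimpleGraph.Walk.cons hadj.symm
              (W1.toPath : D.T.Walk r s').reverse).support := by
            rw [SimpleGraph.Walk.support_cons]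
            refine List.mem_cons_of_mem _ ?_
            rw [SimpleGraph.Walk.support_reverse, List.mem_reverse]
            exact SimpleGraph.Walk.end_mem_support _
          rw [hval] at hmem
          rw [SimpleGraph.Path.reverse] at hmem
          simp only [SimpleGraph.Walk.support_reverse, List.mem_reverse] at hmem
          exact hP2s' hmem
        | @cons _ d _ hadj' w'' =>
          -- internal vertex `c` of the path separates `s'` and `s`
          have hnodup := hRp.support_nodup
          rw [SimpleGraph.Walk.support_cons, SimpleGraph.Walk.support_cons] at hnodup
          have hcs' : c ≠ s' := by
            intro h
            rw [List.nodup_cons] at hnodup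
            exact hnodup.1 (h ▸ List.mem_cons_self)
          have hcs : c ≠ s := by
            intro h
            rw [List.nodup_cons, List.nodup_cons] at hnodup
            exact hnodup.2.1 (h ▸ (SimpleGraph.Walk.end_mem_support w''))
          have hcsup : c ∈ (SimpleGraph.Walk.cons hadj
              (SimpleGraph.Walk.cons hadj' w'')).support := by
            rw [SimpleGraph.Walk.support_cons, SimpleGraph.Walk.support_cons]
            exact List.mem_cons_of_mem _ List.mem_cons_self
          have hsepc := tree_sep hT _ hRp hcsup (Ne.symm hcs') (Ne.symm hcs)
          exact hsepc (hAB c (Ne.symm hcs) (Ne.symm hcs')).symm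
    -- the counting argument at nodes `s` and `s'`
    set A : Finset (Fin (4 * k)) :=
      Finset.univ.filter (fun j => ¬ F (mid j) = s ∧ ¬ F (mid j) = s') with hA
    set Bs : Finset (Fin (4 * k)) := Finset.univ.filter (fun j => F (mid j) = s) with hBs
    set Bs' : Finset (Fin (4 * k)) := Finset.univ.filter (fun j => F (mid j) = s') with hBs'
    have hsub : (Finset.univ : Finset (Fin (4 * k))) ⊆ A ∪ Bs ∪ Bs' := by
      intro j _
      by_cases h : F (mid j) = s
      · exact Finset.mem_union_left _ (Finset.mem_union_right _
          (Finset.mem_filter.mpr ⟨Finset.mem_univ _, h⟩))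
      · by_cases h' : F (mid j) = s'
        · exact Finset.mem_union_right _ (Finset.mem_filter.mpr ⟨Finset.mem_univ _, h'⟩)
        · exact Finset.mem_union_left _ (Finset.mem_union_left _
            (Finset.mem_filter.mpr ⟨Finset.mem_univ _, ⟨h, h'⟩⟩))
    have hcardA : 4 * k ≤ A.card + 2 * m := by
      have h1' := C1 mid hmidinj s
      have h2' := C1 mid hmidinj s'
      rw [← hBs] at h1'
      rw [← hBs'] at h2'
      have h3' : (Finset.univ : Finset (Fin (4 * k))).card ≤ A.card + Bs.card + Bs'.card :=
        le_trans (Finset.card_le_card hsub)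
          (le_trans (Finset.card_union_le _ _) (by
            have := Finset.card_union_le A Bs
            omega))
      rw [Finset.card_univ, Fintype.card_fin] at h3'
      omega
    -- split A according to which separation holds
    set A1 : Finset (Fin (4 * k)) := A.filter (fun j => ∃ (hr : F (mid j) ≠ s),
        ¬ (D.T.induce {x | x ≠ s}).Reachable ⟨F (mid j), hr⟩ ⟨s', hs's⟩) with hA1
    set A2 : Finset (Fin (4 * k)) := A.filter (fun j => ¬ ∃ (hr : F (mid j) ≠ s),
        ¬ (D.T.induce {x | x ≠ s}).Reachable ⟨F (mid j), hr⟩ ⟨s', hs's⟩) with hA2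
    have hsubA : A ⊆ A1 ∪ A2 := by
      intro j hj
      by_cases h : ∃ (hr : F (mid j) ≠ s),
          ¬ (D.T.induce {x | x ≠ s}).Reachable ⟨F (mid j), hr⟩ ⟨s', hs's⟩
      · exact Finset.mem_union_left _ (Finset.mem_filter.mpr ⟨hj, h⟩)
      · exact Finset.mem_union_right _ (Finset.mem_filter.mpr ⟨hj, h⟩)
    -- crossing edges at `s` from A1
    have hcross1 : ∀ j ∈ A1, D.Crosses s s(hubR, mid j) := by
      intro j hj
      obtain ⟨hjA, hr, hnr⟩ := Finset.mem_filter.mp hj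
      refine ⟨((thickenedPath (4 * k)).mem_edgeSet).mpr (hadjR j), hubR, mid j, s', F (mid j),
        hs's, hr, rfl, hbagR, hF (mid j), ?_⟩
      intro hre
      exact hnr hre.symm
    -- crossing edges at `s'` from A2
    have hcross2 : ∀ j ∈ A2, D.Crosses s' s(hubL, mid j) := by
      intro j hj
      obtain ⟨hjA, hcond⟩ := Finset.mem_filter.mp hj
      obtain ⟨-, hrs, hrs'⟩ := Finset.mem_filter.mp hjA
      push_neg at hcond
      have hre : (D.T.induce {x | x ≠ s}).Reachable ⟨F (mid j), hrs⟩ ⟨s', hs's⟩ :=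
        hcond hrs
      have hnr : ¬ (D.T.induce {x | x ≠ s'}).Reachable ⟨F (mid j), hrs'⟩ ⟨s, hss⟩ := by
        rcases claim (F (mid j)) hrs hrs' with h | h
        · exact absurd hre h
        · exact h
      refine ⟨((thickenedPath (4 * k)).mem_edgeSet).mpr (hadjL j), hubL, mid j, s, F (mid j),
        hss, hrs', rfl, hbagL, hF (mid j), ?_⟩
      intro hre'
      exact hnr hre'.symm
    have hinj1 : Set.InjOn (fun j => s(hubR, mid j)) A1 := by
      intro x hx y hy hxy
      simp only at hxy
      exact (Prod.ext_iff.mp (sym2_mid_inj hxy)).2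
    have hinj2 : Set.InjOn (fun j => s(hubL, mid j)) A2 := by
      intro x hx y hy hxy
      simp only at hxy
      exact (Prod.ext_iff.mp (sym2_mid_inj hxy)).2
    have hm1 := C2 s A1 _ hcross1 hinj1
    have hm2 := C2 s' A2 _ hcross2 hinj2
    have hAcard : A.card ≤ A1.card + A2.card :=
      le_trans (Finset.card_le_card hsubA) (Finset.card_union_le _ _)
    omega
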